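/- arXiv:1207.0624 — 5 statements merged into one kernel-verified Lean document; each statement's English description precedes it below -/
import Mathlib

section
/- Let Γ be a group generated by a conjugation-invariant subset S (with S = S⁻¹), and let ‖·‖_S denote the associated word norm. If ψ : Γ → ℝ is a homogeneous quasi-morphism with defect D_ψ that vanishes on S, then |ψ(f)| ≤ D_ψ·‖f‖_S for all f ∈ Γ. In particular, if ψ(f) ≠ 0 for some f, then the word norm ‖·‖_S is unbounded on Γ, since ‖f^n‖_S ≥ n·|ψ(f)|/D_ψ. -/
def IsHomogeneousQM {Γ : Type*} [Group Γ] (ψ : Γ → ℝ) : Prop :=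
  ∀ (g : Γ) (n : ℤ), ψ (g ^ n) = n * ψ g

/-- The word norm associated to a generating set `S`. -/
noncomputable def wordNorm {Γ : Type*} [Group Γ] (S : Set Γ) (f : Γ) : ℕ :=
  sInf {m | ∃ l : List Γ, l.length = m ∧ (∀ x ∈ l, x ∈ S) ∧ l.prod = f}

/-- A homogeneous quasi-morphism of defect `D` vanishing on a conjugation-invariant
symmetric generating set `S` satisfies `|ψ f| ≤ D * ‖f‖_S`, and
`‖f^n‖_S ≥ n |ψ f| / D`. -/
theorem qm_vanishing_bounds_word_norm {Γ : Type*} [Group Γ] (S : Set Γ)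
    (hsymm : ∀ s ∈ S, s⁻¹ ∈ S)
    (hconj : ∀ s ∈ S, ∀ g : Γ, g * s * g⁻¹ ∈ S)
    (hgen : ∀ f : Γ, ∃ l : List Γ, (∀ x ∈ l, x ∈ S) ∧ l.prod = f)
    (ψ : Γ → ℝ) (D : ℝ) (hD : 0 < D)
    (hdef : ∀ g h : Γ, |ψ (g * h) - ψ g - ψ h| ≤ D)
    (hhom : IsHomogeneousQM ψ)
    (hvan : ∀ s ∈ S, ψ s = 0) :
    (∀ f : Γ, |ψ f| ≤ D * wordNorm S f) ∧
      ∀ (f : Γ) (n : ℕ), (n : ℝ) * |ψ f| / D ≤ wordNorm S (f ^ n) := by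
  have hψ1 : ψ 1 = 0 := by
    have := hhom 1 0
    simpa using this
  have key : ∀ l : List Γ, (∀ x ∈ l, x ∈ S) → |ψ l.prod| ≤ D * l.length := by
    intro l
    induction l with
    | nil => intro _; simp [hψ1]
    | cons a t ih =>
      intro hl
      have ha : ψ a = 0 := hvan a (hl a List.mem_cons_self)
      have ht := ih (fun x hx => hl x (List.mem_cons_of_mem a hx))
      have hd := hdef a t.prod
      rw [ha, sub_zero] at hd
      have habs : |ψ (a * t.prod)| - |ψ t.prod| ≤ |ψ (a * t.prod) - ψ t.prod| :=
        abs_sub_abs_le_abs_sub _ _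
      have this : |ψ (a * t.prod)| ≤ D + |ψ t.prod| := by linarith
      simp only [List.prod_cons, List.length_cons]
      push_cast
      calc |ψ (a * t.prod)| ≤ D + |ψ t.prod| := this
        _ ≤ D + D * t.length := by linarith
        _ = D * (t.length + 1) := by ring
  have main : ∀ f : Γ, |ψ f| ≤ D * wordNorm S f := by
    intro f
    obtain ⟨l, hl, hp⟩ := hgen f
    have hne : {m | ∃ l : List Γ, l.length = m ∧ (∀ x ∈ l, x ∈ S) ∧ l.prod = f}.Nonempty :=
      ⟨l.length, l, rfl, hl, hp⟩
    obtain ⟨l', hl'len, hl'S, hl'p⟩ := Nat.sInf_mem hne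
    have := key l' hl'S
    rw [hl'p, hl'len] at this
    exact this
  refine ⟨main, fun f n => ?_⟩
  have h1 : |ψ (f ^ n)| = n * |ψ f| := by
    have := hhom f n
    rw [zpow_natCast] at this
    rw [this, abs_mul]
    simp
  have := main (f ^ n)
  rw [h1] at this
  rw [div_le_iff₀ hD] at *
  linarith
end

section
/- Let Γ be a group with a conjugation-invariant symmetric generating set S, and suppose f₁,…,f_k ∈ Γ pairwise commute and there exist homogeneous quasi-morphisms ψ₁,…,ψ_k on Γ, each vanishing on S, with ψ_i(f_j) = δ_{ij}. Then the homomorphism Ψ : ℤ^k → Γ, Ψ(d₁,…,d_k) = f₁^{d₁}⋯f_k^{d_k}, is injective and bi-Lipschitz with respect to the ℓ¹ word metric on ℤ^k and the word metric on Γ associated to S; explicitly, letting 𝔇 = max_i D_{ψ_i} > 0 and 𝔐 = max_i ‖f_i‖_S, one has (k𝔇)⁻¹ Σ|d_i| ≤ ‖f₁^{d₁}⋯f_k^{d_k}‖_S ≤ 𝔐 Σ|d_i|. -/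
section Aux
variable {Γ : Type*} [Group Γ] {S : Set Γ}

lemma wordNorm_le_of_list {g : Γ} {l : List Γ} (hl : ∀ x ∈ l, x ∈ S) (hp : l.prod = g) :
    wordNorm S g ≤ l.length := Nat.sInf_le ⟨l, rfl, hl, hp⟩

lemma wordNorm_spec (hgen : ∀ f : Γ, ∃ l : List Γ, (∀ x ∈ l, x ∈ S) ∧ l.prod = f) (g : Γ) :
    ∃ l : List Γ, l.length = wordNorm S g ∧ (∀ x ∈ l, x ∈ S) ∧ l.prod = g := by
  obtain ⟨l, hl, hp⟩ := hgen g
  exact Nat.sInf_mem (⟨l.length, l, rfl, hl, hp⟩ : {m | ∃ l : List Γ, l.length = m ∧ (∀ x ∈ l, x ∈ S) ∧ l.prod = g}.Nonempty)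

lemma wordNorm_mul_le (hgen : ∀ f : Γ, ∃ l : List Γ, (∀ x ∈ l, x ∈ S) ∧ l.prod = f) (g h : Γ) :
    wordNorm S (g * h) ≤ wordNorm S g + wordNorm S h := by
  obtain ⟨l1, h1, hl1, hp1⟩ := wordNorm_spec hgen g
  obtain ⟨l2, h2, hl2, hp2⟩ := wordNorm_spec hgen h
  have := wordNorm_le_of_list (S := S) (g := g * h) (l := l1 ++ l2)
    (by intro x hx; rcases List.mem_append.1 hx with h | h; exacts [hl1 x h, hl2 x h])
    (by rw [List.prod_append, hp1, hp2])
  simpa [h1, h2] using this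

lemma wordNorm_inv_le (hsymm : ∀ s ∈ S, s⁻¹ ∈ S)
    (hgen : ∀ f : Γ, ∃ l : List Γ, (∀ x ∈ l, x ∈ S) ∧ l.prod = f) (g : Γ) :
    wordNorm S g⁻¹ ≤ wordNorm S g := by
  obtain ⟨l, hlen, hl, hp⟩ := wordNorm_spec hgen g
  have := wordNorm_le_of_list (S := S) (g := g⁻¹) (l := (l.map Inv.inv).reverse)
    (by intro x hx
        simp only [List.mem_reverse, List.mem_map] at hx
        obtain ⟨y, hy, rfl⟩ := hx
        exact hsymm y (hl y hy))
    (by rw [← List.prod_inv_reverse, hp])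
  simpa [hlen] using this

lemma wordNorm_pow_le (hgen : ∀ f : Γ, ∃ l : List Γ, (∀ x ∈ l, x ∈ S) ∧ l.prod = f)
    (g : Γ) (n : ℕ) : wordNorm S (g ^ n) ≤ n * wordNorm S g := by
  induction n with
  | zero =>
      have h0 : wordNorm S (g ^ 0) ≤ 0 :=
        wordNorm_le_of_list (S := S) (g := g ^ 0) (l := []) (by simp) (by simp)
      omega
  | succ n ih =>
      calc wordNorm S (g ^ (n + 1)) ≤ wordNorm S (g ^ n) + wordNorm S g := by
            rw [pow_succ]; exact wordNorm_mul_le hgen _ _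
        _ ≤ n * wordNorm S g + wordNorm S g := by omega
        _ = (n + 1) * wordNorm S g := by ring

lemma wordNorm_zpow_le (hsymm : ∀ s ∈ S, s⁻¹ ∈ S)
    (hgen : ∀ f : Γ, ∃ l : List Γ, (∀ x ∈ l, x ∈ S) ∧ l.prod = f)
    (g : Γ) (d : ℤ) : wordNorm S (g ^ d) ≤ d.natAbs * wordNorm S g := by
  rcases Int.natAbs_eq d with h | h
  · rw [h, zpow_natCast]; exact wordNorm_pow_le hgen g d.natAbs
  · rw [h, zpow_neg, zpow_natCast]
    have h1 := wordNorm_inv_le hsymm hgen (g ^ d.natAbs)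
    have h2 := wordNorm_pow_le hgen g d.natAbs
    rw [Int.natAbs_neg, Int.natAbs_natCast]
    exact le_trans h1 h2

lemma qm_one {ψ : Γ → ℝ} (hhom : ∀ (g : Γ) (n : ℤ), ψ (g ^ n) = n * ψ g) : ψ 1 = 0 := by
  have := hhom 1 0
  simpa using this

lemma qm_abs_le {ψ : Γ → ℝ} {Dc : ℝ}
    (hdef : ∀ g h : Γ, |ψ (g * h) - ψ g - ψ h| ≤ Dc)
    (hhom : ∀ (g : Γ) (n : ℤ), ψ (g ^ n) = n * ψ g)
    (hvan : ∀ s ∈ S, ψ s = 0)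
    (hgen : ∀ f : Γ, ∃ l : List Γ, (∀ x ∈ l, x ∈ S) ∧ l.prod = f)
    (g : Γ) :
    |ψ g| ≤ Dc * wordNorm S g := by
  obtain ⟨l, hlen, hl, hp⟩ := wordNorm_spec hgen g
  rw [← hlen, ← hp]
  clear hp hlen
  induction l with
  | nil => simp [qm_one hhom]
  | cons a t ih =>
      have ha : ψ a = 0 := hvan a (hl a (List.mem_cons_self))
      have ht := ih (fun x hx => hl x (List.mem_cons_of_mem a hx))
      have hd := hdef a t.prod
      have : |ψ (a * t.prod)| ≤ |ψ a| + |ψ t.prod| + Dc := by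
        have := abs_sub_abs_le_abs_sub (ψ (a * t.prod)) (ψ a + ψ t.prod)
        have h2 : |ψ a + ψ t.prod| ≤ |ψ a| + |ψ t.prod| := abs_add_le _ _
        have h3 : |ψ (a * t.prod) - (ψ a + ψ t.prod)| ≤ Dc := by
          simpa [sub_sub] using hd
        linarith
      simp only [List.prod_cons, List.length_cons]
      push_cast
      rw [ha] at this
      simp at this
      calc |ψ (a * t.prod)| ≤ |ψ t.prod| + Dc := this
        _ ≤ Dc * t.length + Dc := by linarith
        _ = Dc * (t.length + 1) := by ring

lemma qm_commute_add {ψ : Γ → ℝ} {Dc : ℝ}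
    (hdef : ∀ g h : Γ, |ψ (g * h) - ψ g - ψ h| ≤ Dc)
    (hhom : ∀ (g : Γ) (n : ℤ), ψ (g ^ n) = n * ψ g)
    {g h : Γ} (hc : Commute g h) : ψ (g * h) = ψ g + ψ h := by
  by_contra hne
  set x := ψ (g * h) - ψ g - ψ h with hx
  have hx0 : x ≠ 0 := by intro h0; apply hne; rw [hx] at h0; linarith
  have hxpos : 0 < |x| := abs_pos.2 hx0
  obtain ⟨n, hn⟩ := exists_nat_gt (Dc / |x|)
  have hn1 : (0:ℝ) < n + 1 := by positivity
  have key : ∀ m : ℕ, |(m : ℝ) * x| ≤ Dc := by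
    intro m
    have hpow : (g * h) ^ (m : ℤ) = g ^ (m : ℤ) * h ^ (m : ℤ) := by
      rw [zpow_natCast, zpow_natCast, zpow_natCast, hc.mul_pow]
    have := hdef (g ^ (m : ℤ)) (h ^ (m : ℤ))
    rw [← hpow, hhom, hhom, hhom] at this
    have : |(m : ℝ) * (ψ (g*h) - ψ g - ψ h)| ≤ Dc := by
      rw [mul_sub, mul_sub]; exact this
    simpa [hx] using this
  have := key (n + 1)
  rw [abs_mul] at this
  rw [Nat.abs_cast] at this
  push_cast at this
  have hgt : Dc < ((n:ℝ)+1) * |x| := by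
    have : Dc / |x| < (n:ℝ) + 1 := by linarith
    calc Dc = (Dc / |x|) * |x| := by field_simp
      _ < ((n:ℝ)+1) * |x| := by exact mul_lt_mul_of_pos_right this hxpos
  linarith

lemma qm_list_prod {ψ : Γ → ℝ} {Dc : ℝ}
    (hdef : ∀ g h : Γ, |ψ (g * h) - ψ g - ψ h| ≤ Dc)
    (hhom : ∀ (g : Γ) (n : ℤ), ψ (g ^ n) = n * ψ g)
    (l : List Γ) (hl : ∀ a ∈ l, ∀ b ∈ l, Commute a b) :
    ψ l.prod = (l.map ψ).sum := by
  induction l with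
  | nil => simp [qm_one hhom]
  | cons a t ih =>
      have hc : Commute a t.prod :=
        Commute.list_prod_right _ _ (fun b hb => hl a (List.mem_cons_self) b (List.mem_cons_of_mem a hb))
      rw [List.prod_cons, qm_commute_add hdef hhom hc,
        ih (fun x hx y hy => hl x (List.mem_cons_of_mem a hx) y (List.mem_cons_of_mem a hy))]
      simp

lemma wordNorm_list_prod_le (hgen : ∀ f : Γ, ∃ l : List Γ, (∀ x ∈ l, x ∈ S) ∧ l.prod = f)
    (l : List Γ) : wordNorm S l.prod ≤ (l.map (wordNorm S)).sum := by
  induction l with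
  | nil =>
      have h0 : wordNorm S (1:Γ) ≤ 0 :=
        wordNorm_le_of_list (S := S) (g := 1) (l := []) (by simp) (by simp)
      simpa using h0
  | cons a t ih =>
      rw [List.prod_cons, List.map_cons, List.sum_cons]
      exact le_trans (wordNorm_mul_le hgen a t.prod) (by omega)

end Aux

/-- Bi-Lipschitz embedding of `ℤ^k`: pairwise commuting elements detected by
homogeneous quasi-morphisms vanishing on the generating set give a bi-Lipschitz
injective homomorphism of `ℤ^k`. -/
theorem biLipschitz_Zk_embedding {Γ : Type*} [Group Γ] (k : ℕ) (hk : 0 < k)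
    (S : Set Γ)
    (hsymm : ∀ s ∈ S, s⁻¹ ∈ S)
    (hconj : ∀ s ∈ S, ∀ g : Γ, g * s * g⁻¹ ∈ S)
    (hgen : ∀ f : Γ, ∃ l : List Γ, (∀ x ∈ l, x ∈ S) ∧ l.prod = f)
    (f : Fin k → Γ) (hcomm : ∀ i j, Commute (f i) (f j))
    (ψ : Fin k → Γ → ℝ) (D : Fin k → ℝ) (hD : ∀ i, 0 < D i)
    (hdef : ∀ i, ∀ g h : Γ, |ψ i (g * h) - ψ i g - ψ i h| ≤ D i)
    (hhom : ∀ i, IsHomogeneousQM (ψ i))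
    (hvan : ∀ i, ∀ s ∈ S, ψ i s = 0)
    (hdelta : ∀ i j, ψ i (f j) = if i = j then 1 else 0)
    (𝔇 : ℝ) (h𝔇 : IsGreatest (Set.range D) 𝔇)
    (𝔐 : ℕ) (h𝔐 : IsGreatest (Set.range fun i => wordNorm S (f i)) 𝔐) :
    Function.Injective (fun d : Fin k → ℤ => (List.ofFn fun i => f i ^ d i).prod) ∧
      ∀ d : Fin k → ℤ,
        ((k : ℝ) * 𝔇)⁻¹ * ∑ i, |(d i : ℝ)| ≤ wordNorm S ((List.ofFn fun i => f i ^ d i).prod) ∧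
          (wordNorm S ((List.ofFn fun i => f i ^ d i).prod) : ℝ) ≤ (𝔐 : ℝ) * ∑ i, |(d i : ℝ)| := by
  -- ψ i evaluated at the product gives d i
  have hpsi : ∀ (d : Fin k → ℤ) (i : Fin k),
      ψ i ((List.ofFn fun j => f j ^ d j).prod) = (d i : ℝ) := by
    intro d i
    have hcl : ∀ a ∈ (List.ofFn fun j => f j ^ d j), ∀ b ∈ (List.ofFn fun j => f j ^ d j),
        Commute a b := by
      intro a ha b hb
      rw [List.mem_ofFn] at ha hb
      obtain ⟨ja, rfl⟩ := ha
      obtain ⟨jb, rfl⟩ := hb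
      exact (hcomm ja jb).zpow_zpow _ _
    rw [qm_list_prod (hdef i) (hhom i) _ hcl]
    rw [List.map_ofFn, List.sum_ofFn]
    have : ∀ j, (ψ i ∘ fun j => f j ^ d j) j = (d j : ℝ) * (if i = j then 1 else 0) := by
      intro j
      simp only [Function.comp_apply]
      rw [hhom i (f j) (d j), hdelta i j]
    simp only [this]
    simp
  have h𝔇pos : 0 < 𝔇 := lt_of_lt_of_le (hD ⟨0, hk⟩) (h𝔇.2 ⟨⟨0, hk⟩, rfl⟩)
  constructor
  · intro d d' hdd
    funext i
    have h1 := hpsi d i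
    have h2 := hpsi d' i
    simp only at hdd
    rw [hdd, h2] at h1
    exact_mod_cast h1.symm
  · intro d
    set P := (List.ofFn fun i => f i ^ d i).prod with hP
    constructor
    · -- lower bound
      have hbound : ∀ i : Fin k, |(d i : ℝ)| ≤ 𝔇 * wordNorm S P := by
        intro i
        have h1 : |ψ i P| ≤ D i * wordNorm S P :=
          qm_abs_le (hdef i) (hhom i) (hvan i) hgen P
        rw [hpsi d i] at h1
        exact h1.trans (mul_le_mul_of_nonneg_right (h𝔇.2 ⟨i, rfl⟩) (Nat.cast_nonneg _))
      have hsum : ∑ i, |(d i : ℝ)| ≤ (k : ℝ) * (𝔇 * wordNorm S P) := by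
        calc ∑ i, |(d i : ℝ)| ≤ ∑ _i : Fin k, 𝔇 * (wordNorm S P : ℝ) :=
              Finset.sum_le_sum fun i _ => hbound i
          _ = (k : ℝ) * (𝔇 * wordNorm S P) := by simp [Finset.sum_const, mul_comm]
      have hkpos : (0:ℝ) < (k : ℝ) * 𝔇 := by positivity
      rw [inv_mul_le_iff₀ hkpos]
      calc ∑ i, |(d i : ℝ)| ≤ (k : ℝ) * (𝔇 * wordNorm S P) := hsum
        _ = (k : ℝ) * 𝔇 * wordNorm S P := by ring
    · -- upper bound
      have h1 : (wordNorm S P : ℝ) ≤ ∑ i, ((d i).natAbs * wordNorm S (f i) : ℝ) := by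
        have := wordNorm_list_prod_le (S := S) hgen (List.ofFn fun i => f i ^ d i)
        rw [List.map_ofFn, List.sum_ofFn] at this
        have h2 : ∑ i, (wordNorm S ∘ fun i => f i ^ d i) i ≤ ∑ i, (d i).natAbs * wordNorm S (f i) :=
          Finset.sum_le_sum fun i _ => wordNorm_zpow_le hsymm hgen (f i) (d i)
        exact_mod_cast le_trans this h2
      refine h1.trans ?_
      rw [Finset.mul_sum]
      refine Finset.sum_le_sum fun i _ => ?_
      have hw : (wordNorm S (f i) : ℝ) ≤ (𝔐 : ℝ) := by exact_mod_cast h𝔐.2 ⟨i, rfl⟩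
      have habs : ((d i).natAbs : ℝ) = |(d i : ℝ)| := by
        simp [Nat.cast_natAbs]
      push_cast
      rw [habs]
      calc |(d i:ℝ)| * (wordNorm S (f i) : ℝ) ≤ |(d i:ℝ)| * 𝔐 :=
            mul_le_mul_of_nonneg_left hw (abs_nonneg _)
        _ = (𝔐:ℝ) * |(d i:ℝ)| := by ring
end

section
/- Injectivity criterion via Kronecker-delta quasi-morphisms: if f₁,…,f_k are pairwise commuting elements of a group Γ and there exist homogeneous quasi-morphisms ψ₁,…,ψ_k on Γ with ψ_i(f_j) = δ_{ij}, then f₁,…,f_k generate a free abelian subgroup of rank k, i.e. the map ℤ^k → Γ, (d₁,…,d_k) ↦ f₁^{d₁}⋯f_k^{d_k}, is an injective group homomorphism. -/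
def IsQuasimorphism {Γ : Type*} [Group Γ] (ψ : Γ → ℝ) : Prop :=
  ∃ A : ℝ, 0 ≤ A ∧ ∀ g h : Γ, |ψ (g * h) - ψ g - ψ h| ≤ A

lemma qm_add_of_commute {Γ : Type*} [Group Γ] {ψ : Γ → ℝ}
    (hqm : IsQuasimorphism ψ) (hhom : IsHomogeneousQM ψ) {g h : Γ}
    (hgh : Commute g h) : ψ (g * h) = ψ g + ψ h := by
  obtain ⟨A, hA, hd⟩ := hqm
  have key : ∀ n : ℕ, |(n : ℝ) * (ψ (g * h) - ψ g - ψ h)| ≤ A := by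
    intro n
    have h1 : (g * h) ^ (n : ℤ) = g ^ (n : ℤ) * h ^ (n : ℤ) := by
      rw [hgh.mul_zpow]
    have := hd (g ^ (n : ℤ)) (h ^ (n : ℤ))
    rw [← h1, hhom, hhom, hhom] at this
    calc |(n : ℝ) * (ψ (g * h) - ψ g - ψ h)|
        = |(n : ℤ) * ψ (g * h) - (n : ℤ) * ψ g - (n : ℤ) * ψ h| := by push_cast; ring_nf
      _ ≤ A := this
  by_contra hne
  have hpos : 0 < |ψ (g * h) - ψ g - ψ h| := by
    apply abs_pos.mpr; intro h0; apply hne; linarith [sub_eq_zero.mp (by linarith : ψ (g * h) - (ψ g + ψ h) = 0)]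
  obtain ⟨n, hn⟩ := exists_nat_gt (A / |ψ (g * h) - ψ g - ψ h|)
  have := key n
  rw [abs_mul, abs_of_nonneg (by positivity : (0:ℝ) ≤ (n:ℝ))] at this
  have := (div_lt_iff₀ hpos).mp hn
  linarith

lemma qm_list_prod_s8 {Γ : Type*} [Group Γ] {ψ : Γ → ℝ}
    (hqm : IsQuasimorphism ψ) (hhom : IsHomogeneousQM ψ) :
    ∀ l : List Γ, l.Pairwise Commute → ψ l.prod = (l.map ψ).sum
  | [], _ => by
    have h0 := hhom 1 0
    simpa using h0
  | a :: t, hp => by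
    rw [List.pairwise_cons] at hp
    have hc : Commute a t.prod := Commute.list_prod_right _ _ hp.1
    have ih := qm_list_prod_s8 hqm hhom t hp.2
    simp only [List.prod_cons, List.map_cons, List.sum_cons]
    rw [qm_add_of_commute hqm hhom hc, ih]

/-- Pairwise commuting elements detected by Kronecker-delta homogeneous
quasi-morphisms generate a free abelian subgroup of rank `k`. -/
theorem free_abelian_from_delta_qms {Γ : Type*} [Group Γ] (k : ℕ)
    (f : Fin k → Γ) (hcomm : ∀ i j, Commute (f i) (f j))
    (ψ : Fin k → Γ → ℝ)
    (hqm : ∀ i, IsQuasimorphism (ψ i)) (hhom : ∀ i, IsHomogeneousQM (ψ i))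
    (hdelta : ∀ i j, ψ i (f j) = if i = j then 1 else 0) :
    Function.Injective (fun d : Fin k → ℤ => (List.ofFn fun i => f i ^ d i).prod) := by
  have main : ∀ (d : Fin k → ℤ) (i : Fin k),
      ψ i (List.ofFn fun j => f j ^ d j).prod = (d i : ℝ) := by
    intro d i
    have hpw : (List.ofFn fun j => f j ^ d j).Pairwise Commute := by
      rw [List.pairwise_ofFn]
      intro a b _
      exact (hcomm a b).zpow_zpow _ _
    rw [qm_list_prod_s8 (hqm i) (hhom i) _ hpw]
    have : ((List.ofFn fun j => f j ^ d j).map (ψ i)).sum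
        = ∑ j : Fin k, ψ i (f j ^ d j) := by
      rw [List.map_ofFn, List.sum_ofFn]; rfl
    rw [this]
    have : ∀ j : Fin k, ψ i (f j ^ d j) = if i = j then (d j : ℝ) else 0 := by
      intro j
      rw [hhom i (f j) (d j), hdelta i j]
      split <;> simp
    simp [this]
  intro d₁ d₂ h
  funext i
  have h2 : ψ i (List.ofFn fun j => f j ^ d₁ j).prod
      = ψ i (List.ofFn fun j => f j ^ d₂ j).prod := congrArg (ψ i) h
  rw [main d₁ i, main d₂ i] at h2
  exact_mod_cast h2
end

section
/- Let Γ be a group, d a right-invariant metric on Γ, and ψ : Γ → ℝ a homogeneous quasi-morphism with defect D_ψ such that |ψ(g)| ≤ C·d(1,g) for all g ∈ Γ, where C > 0. If f, h ∈ Γ and p ∈ ℕ satisfy d(f^p, h^p) < 1, then |ψ(f) − ψ(h)| ≤ (D_ψ + C)/p. -/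
/-- If a homogeneous quasi-morphism is dominated by a right-invariant metric and
`d(f^p, h^p) < 1`, then `|ψ f - ψ h| ≤ (D + C)/p`. -/
theorem qm_close_on_close_powers {Γ : Type*} [Group Γ] [PseudoMetricSpace Γ]
    (hinv : ∀ g h k : Γ, dist (g * k) (h * k) = dist g h)
    (ψ : Γ → ℝ) (D : ℝ) (hD : 0 ≤ D)
    (hdef : ∀ g h : Γ, |ψ (g * h) - ψ g - ψ h| ≤ D)
    (hhom : IsHomogeneousQM ψ)
    (C : ℝ) (hC : 0 < C) (hdom : ∀ g : Γ, |ψ g| ≤ C * dist 1 g)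
    (f h : Γ) (p : ℕ) (hp : 0 < p) (hclose : dist (f ^ p) (h ^ p) < 1) :
    |ψ f - ψ h| ≤ (D + C) / p := by
  have key : dist (1 : Γ) (f ^ p * (h ^ p)⁻¹) = dist (h ^ p) (f ^ p) := by
    have := hinv 1 (f ^ p * (h ^ p)⁻¹) (h ^ p)
    simpa [mul_assoc] using this.symm
  have hψfp : ψ (f ^ p) = (p : ℝ) * ψ f := by
    have := hhom f (p : ℤ) ; simpa using this
  have hψhp : ψ (h ^ p) = (p : ℝ) * ψ h := by
    have := hhom h (p : ℤ) ; simpa using this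
  have hdef' := hdef (f ^ p * (h ^ p)⁻¹) (h ^ p)
  rw [inv_mul_cancel_right] at hdef'
  have hdomv := hdom (f ^ p * (h ^ p)⁻¹)
  rw [key, dist_comm] at hdomv
  have hlt : C * dist (f ^ p) (h ^ p) < C * 1 :=
    mul_lt_mul_of_pos_left hclose hC
  have hbound : |ψ (f ^ p) - ψ (h ^ p)| ≤ D + C := by
    calc |ψ (f ^ p) - ψ (h ^ p)|
        ≤ |ψ (f ^ p) - ψ (f ^ p * (h ^ p)⁻¹) - ψ (h ^ p)| + |ψ (f ^ p * (h ^ p)⁻¹)| := by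
          have := abs_add_le (ψ (f ^ p) - ψ (f ^ p * (h ^ p)⁻¹) - ψ (h ^ p)) (ψ (f ^ p * (h ^ p)⁻¹))
          simpa [sub_add_cancel, sub_add_eq_add_sub] using this.trans_eq' (by ring_nf)
      _ ≤ D + C := by
          have h1 : |ψ (f ^ p) - ψ (f ^ p * (h ^ p)⁻¹) - ψ (h ^ p)| ≤ D := by
            have := hdef'
            rwa [abs_sub_comm] at this ⊢ <;> simp [abs_sub_comm]
          have h2 : |ψ (f ^ p * (h ^ p)⁻¹)| ≤ C := hdomv.trans (by linarith)
          linarith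
  have hp' : (0 : ℝ) < p := by exact_mod_cast hp
  rw [hψfp, hψhp, ← mul_sub, abs_mul, abs_of_pos hp'] at hbound
  rw [le_div_iff₀ hp', mul_comm]
  exact hbound
end

section
/- Continuity of Lipschitz-dominated homogeneous quasi-morphisms: let Γ be a topological group with a right-invariant metric d, and ψ : Γ → ℝ a homogeneous quasi-morphism with |ψ(g)| ≤ C·d(1,g) for all g. Suppose f ∈ Γ and (h_k) is a sequence in Γ such that for every p ∈ ℕ, d(f^p, h_k^p) → 0 as k → ∞. Then ψ(h_k) → ψ(f). -/
/-- Continuity of Lipschitz-dominated homogeneous quasi-morphisms: if all powers of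
`h_k` converge to the corresponding powers of `f` in a right-invariant metric, then
`ψ (h_k) → ψ f`. -/
theorem qm_continuity {Γ : Type*} [Group Γ] [PseudoMetricSpace Γ]
    (hinv : ∀ g h k : Γ, dist (g * k) (h * k) = dist g h)
    (ψ : Γ → ℝ) (D : ℝ) (hD : 0 ≤ D)
    (hdef : ∀ g h : Γ, |ψ (g * h) - ψ g - ψ h| ≤ D)
    (hhom : IsHomogeneousQM ψ)
    (C : ℝ) (hC : 0 < C) (hdom : ∀ g : Γ, |ψ g| ≤ C * dist 1 g)
    (f : Γ) (h : ℕ → Γ)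
    (hclose : ∀ p : ℕ, Filter.Tendsto (fun k => dist (f ^ p) (h k ^ p))
      Filter.atTop (nhds 0)) :
    Filter.Tendsto (fun k => ψ (h k)) Filter.atTop (nhds (ψ f)) := by
  have hpow : ∀ (g : Γ) (p : ℕ), ψ (g ^ p) = p * ψ g := by
    intro g p
    have := hhom g (p : ℤ)
    simpa [zpow_natCast] using this
  -- key inequality
  have key : ∀ (p : ℕ) (k : ℕ),
      (p : ℝ) * |ψ (h k) - ψ f| ≤ C * dist (f ^ p) (h k ^ p) + D := by
    intro p k
    set g : Γ := h k ^ p * (f ^ p)⁻¹ with hg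
    have h1 : g * f ^ p = h k ^ p := by simp [hg]
    have h2 : dist 1 g = dist (f ^ p) (h k ^ p) := by
      have := hinv 1 g (f ^ p)
      rw [one_mul, h1] at this
      rw [← this, dist_comm]
    have h3 : |ψ (h k ^ p) - ψ g - ψ (f ^ p)| ≤ D := by
      have := hdef g (f ^ p)
      rwa [h1] at this
    have h4 : |ψ g| ≤ C * dist (f ^ p) (h k ^ p) := by
      rw [← h2]; exact hdom g
    have h5 : (p : ℝ) * |ψ (h k) - ψ f| = |ψ (h k ^ p) - ψ (f ^ p)| := by
      rw [hpow, hpow, ← mul_sub, abs_mul, abs_of_nonneg (by positivity : (0:ℝ) ≤ (p:ℝ))]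
    rw [h5]
    calc |ψ (h k ^ p) - ψ (f ^ p)|
        = |(ψ (h k ^ p) - ψ g - ψ (f ^ p)) + ψ g| := by ring_nf
      _ ≤ |ψ (h k ^ p) - ψ g - ψ (f ^ p)| + |ψ g| := abs_add_le _ _
      _ ≤ D + C * dist (f ^ p) (h k ^ p) := add_le_add h3 h4
      _ = C * dist (f ^ p) (h k ^ p) + D := by ring
  rw [Metric.tendsto_atTop]
  intro ε hε
  obtain ⟨p, hp⟩ := exists_nat_gt (2 * D / ε)
  have hp0 : (0 : ℝ) < p := lt_of_le_of_lt (by positivity) hp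
  have hDp : D / p < ε / 2 := by
    rw [div_lt_iff₀ hp0]
    have : 2 * D / ε < p := hp
    rw [div_lt_iff₀ hε] at this
    linarith
  have hδ : 0 < ε * p / (2 * C) := by positivity
  have := (Metric.tendsto_atTop.mp (hclose p)) (ε * p / (2 * C)) hδ
  obtain ⟨N, hN⟩ := this
  refine ⟨N, fun k hk => ?_⟩
  have hdk : dist (f ^ p) (h k ^ p) < ε * p / (2 * C) := by
    have := hN k hk
    rwa [Real.dist_eq, sub_zero, abs_of_nonneg dist_nonneg] at this
  have hkey := key p k
  have hC' : C * dist (f ^ p) (h k ^ p) < ε * p / 2 := by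
    have := (mul_lt_mul_of_pos_left hdk hC)
    calc C * dist (f ^ p) (h k ^ p) < C * (ε * p / (2 * C)) := this
      _ = ε * p / 2 := by field_simp
  rw [Real.dist_eq]
  have : (p : ℝ) * |ψ (h k) - ψ f| < ε * p / 2 + D := by linarith
  have hD2 : D < ε / 2 * p := by
    rw [div_lt_iff₀ hp0] at hDp; linarith
  have : (p : ℝ) * |ψ (h k) - ψ f| < ε * p := by linarith
  calc |ψ (h k) - ψ f| = (p : ℝ) * |ψ (h k) - ψ f| / p := by field_simp
    _ < ε * p / p := by gcongr
    _ = ε := by field_simp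
end
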